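/- If the set S is meet closed (so that one may take D = S), then Υ = (S)_{f_1,…,f_n} (E_S^T)^{-1}; here E_S^T is invertible and (E_S^T)^{-1} is the n×n matrix whose (i,j) entry is μ_S(x_i, x_j), the Möbius function of the poset (S, ≤). -/

import Mathlib

open Finset Matrix
open scoped Classical

/-- If `S` is meet closed (so one may take `D = S`), then `Υ = (S)_{f₁,…,fₙ} (E_Sᵀ)⁻¹`;
here `E_Sᵀ` is invertible and `(E_Sᵀ)⁻¹` is the matrix whose `(i,j)` entry is
`μ_S(x i, x j)`, the Möbius function of the poset `(S, ≤)`. -/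
theorem row_adjusted_meet_matrix_upsilon_eq
    {P : Type*} [Lattice P] {n : ℕ}
    (x : Fin n → P) (f : Fin n → P → ℂ) (μ : Fin n → Fin n → ℂ)
    (hxinj : Function.Injective x)
    (hxord : ∀ i j : Fin n, x i ≤ x j → i ≤ j)
    (hmeet : ∀ i j : Fin n, ∃ k : Fin n, x k = x i ⊓ x j)
    (hμ0 : ∀ i j : Fin n, ¬ x i ≤ x j → μ i j = 0)
    (hμ : ∀ i j : Fin n, x i ≤ x j →
      (∑ v ∈ univ.filter (fun v => x i ≤ x v ∧ x v ≤ x j), μ i v) =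
        if i = j then 1 else 0) :
    IsUnit (Matrix.of fun i j : Fin n => if x j ≤ x i then (1 : ℂ) else 0)ᵀ ∧
    (Matrix.of fun i j : Fin n => if x j ≤ x i then (1 : ℂ) else 0)ᵀ⁻¹ =
      Matrix.of (fun i j : Fin n => μ i j) ∧
    (Matrix.of fun i j : Fin n =>
        (if x j ≤ x i then (1 : ℂ) else 0) *
          (∑ v ∈ univ.filter (fun v => x v ≤ x j), f i (x v) * μ v j)) =
      (Matrix.of fun i j : Fin n => f i (x i ⊓ x j)) *
        (Matrix.of fun i j : Fin n => if x j ≤ x i then (1 : ℂ) else 0)ᵀ⁻¹ := by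
  set E : Matrix (Fin n) (Fin n) ℂ :=
    Matrix.of fun i j : Fin n => if x j ≤ x i then (1 : ℂ) else 0 with hE
  set M : Matrix (Fin n) (Fin n) ℂ := Matrix.of (fun i j : Fin n => μ i j) with hM
  -- μ is a left inverse of Eᵀ
  have hME : M * Eᵀ = 1 := by
    ext i j
    simp only [Matrix.mul_apply, Matrix.transpose_apply, hM, hE, Matrix.of_apply,
      Matrix.one_apply]
    have h1 : ∀ v : Fin n, μ i v * (if x v ≤ x j then (1 : ℂ) else 0)
        = if x i ≤ x v ∧ x v ≤ x j then μ i v else 0 := by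
      intro v
      by_cases h2 : x v ≤ x j <;> by_cases h3 : x i ≤ x v <;>
        simp [h2, h3, hμ0 i v]
    rw [Finset.sum_congr rfl fun v _ => h1 v, ← Finset.sum_filter]
    by_cases h : x i ≤ x j
    · exact hμ i j h
    · have hij : i ≠ j := by rintro rfl; exact h le_rfl
      rw [if_neg hij]
      apply Finset.sum_eq_zero
      intro v hv
      simp only [Finset.mem_filter] at hv
      exact absurd (hv.2.1.trans hv.2.2) h
  have hEM : Eᵀ * M = 1 := mul_eq_one_comm.mp hME
  have hinv : Eᵀ⁻¹ = M := Matrix.inv_eq_left_inv hME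
  refine ⟨(Matrix.isUnit_iff_isUnit_det _).mpr (Matrix.isUnit_det_of_left_inverse hME), hinv, ?_⟩
  rw [hinv]
  -- auxiliary function g
  set g : Fin n → Fin n → ℂ :=
    fun i u => ∑ t ∈ univ.filter (fun t => x t ≤ x u), f i (x t) * μ t u with hg
  have claimA : ∀ (i w : Fin n),
      (∑ u ∈ univ.filter (fun u => x u ≤ x w), g i u) = f i (x w) := by
    intro i w
    have h1 : (∑ u ∈ univ.filter (fun u => x u ≤ x w), g i u)
        = ∑ u : Fin n, ∑ t : Fin n,
            (if x t ≤ x u ∧ x u ≤ x w then f i (x t) * μ t u else 0) := by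
      rw [Finset.sum_filter]
      refine Finset.sum_congr rfl fun u _ => ?_
      by_cases h : x u ≤ x w
      · simp only [h, if_true, hg, Finset.sum_filter]
        refine Finset.sum_congr rfl fun t _ => ?_
        by_cases ht : x t ≤ x u <;> simp [ht, h]
      · simp [h]
    rw [h1, Finset.sum_comm]
    have h2 : ∀ t : Fin n,
        (∑ u : Fin n, if x t ≤ x u ∧ x u ≤ x w then f i (x t) * μ t u else 0)
        = f i (x t) * (if t = w then 1 else 0) := by
      intro t
      have : (∑ u : Fin n, if x t ≤ x u ∧ x u ≤ x w then f i (x t) * μ t u else 0)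
          = f i (x t) * ∑ u ∈ univ.filter (fun u => x t ≤ x u ∧ x u ≤ x w), μ t u := by
        rw [Finset.mul_sum, ← Finset.sum_filter]
      rw [this]
      by_cases h : x t ≤ x w
      · rw [hμ t w h]
      · have htw : t ≠ w := by rintro rfl; exact h le_rfl
        rw [if_neg htw, mul_zero]
        have : (∑ u ∈ univ.filter (fun u => x t ≤ x u ∧ x u ≤ x w), μ t u) = 0 := by
          apply Finset.sum_eq_zero
          intro u hu
          simp only [Finset.mem_filter] at hu
          exact absurd (hu.2.1.trans hu.2.2) h
        rw [this, mul_zero]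
    rw [Finset.sum_congr rfl fun t _ => h2 t]
    simp
  have key : ∀ i v : Fin n, f i (x i ⊓ x v)
      = ∑ u : Fin n, (if x u ≤ x i ∧ x u ≤ x v then g i u else 0) := by
    intro i v
    obtain ⟨k, hk⟩ := hmeet i v
    rw [← hk, ← claimA i k, Finset.sum_filter]
    refine Finset.sum_congr rfl fun u _ => ?_
    simp only [hk, le_inf_iff]
  -- inner orthogonality from Eᵀ * M = 1
  have horth : ∀ u j : Fin n,
      (∑ v : Fin n, if x u ≤ x v then μ v j else 0) = if u = j then 1 else 0 := by
    intro u j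
    have := congrFun (congrFun hEM u) j
    simp only [Matrix.mul_apply, Matrix.transpose_apply, hM, hE, Matrix.of_apply,
      Matrix.one_apply] at this
    rw [← this]
    refine Finset.sum_congr rfl fun v _ => ?_
    by_cases h : x u ≤ x v <;> simp [h]
  ext i j
  simp only [Matrix.mul_apply, Matrix.of_apply, hM]
  have h3 : (∑ v : Fin n, f i (x i ⊓ x v) * μ v j)
      = ∑ u : Fin n, ∑ v : Fin n,
          (if x u ≤ x i then (if x u ≤ x v then g i u * μ v j else 0) else 0) := by
    rw [Finset.sum_comm]
    refine Finset.sum_congr rfl fun v _ => ?_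
    rw [key i v, Finset.sum_mul]
    refine Finset.sum_congr rfl fun u _ => ?_
    by_cases h1 : x u ≤ x i <;> by_cases h2 : x u ≤ x v <;> simp [h1, h2]
  rw [h3]
  have h4 : ∀ u : Fin n,
      (∑ v : Fin n, if x u ≤ x i then (if x u ≤ x v then g i u * μ v j else 0) else 0)
      = if x u ≤ x i then g i u * (if u = j then 1 else 0) else 0 := by
    intro u
    by_cases h : x u ≤ x i
    · simp only [h, if_true]
      rw [← horth u j, Finset.mul_sum]
      refine Finset.sum_congr rfl fun v _ => ?_
      by_cases h2 : x u ≤ x v <;> simp [h2]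
    · simp [h]
  rw [Finset.sum_congr rfl fun u _ => h4 u]
  have h5 : (∑ u : Fin n, if x u ≤ x i then g i u * (if u = j then 1 else 0) else 0)
      = if x j ≤ x i then g i j else 0 := by
    rw [Finset.sum_eq_single j]
    · by_cases h : x j ≤ x i <;> simp [h]
    · intro u _ hu
      by_cases h : x u ≤ x i <;> simp [h, hu]
    · simp
  rw [h5, hg]
  by_cases h : x j ≤ x i <;> simp [h]
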